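/- arXiv:2012.02183 — 3 statements merged into one kernel-verified Lean document; each statement's English description precedes it below -/
import Mathlib

section
/- Let q ≥ 2, n ≥ 2, and let f : V(H(n,q)) → ℂ be a function with f ≢ 0 satisfying Af = λ·f for a scalar λ ≠ −n, where A is the adjacency operator of H(n,q). Then there exists a coordinate i ∈ {1,…,n} such that the function f *_i ψ on H(n−1,q), defined by (f *_i ψ)(x) = Σ_{a ∈ ZMod q} f(x^a_i), is not identically zero. -/
open Finset

/-- Vertex set of the Hamming graph `H(n,q)`: `q`-ary words of length `n`. -/
abbrev HV (n q : ℕ) : Type := Fin n → ZMod q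

/-- The radius-`r` sphere around `x` in `H(n,q)`. -/
def hSphere {n q : ℕ} (x : HV n q) (r : ℕ) : Set (HV n q) := {y | hammingDist x y = r}

/-- The radius-1 ball around `x` in `H(n,q)`. -/
def hBall {n q : ℕ} (x : HV n q) : Set (HV n q) := {z | hammingDist x z ≤ 1}

/-- A code `C` has code distance at least `d`. -/
def minDistGe {n q : ℕ} (C : Set (HV n q)) (d : ℕ) : Prop :=
  ∀ x ∈ C, ∀ y ∈ C, x ≠ y → d ≤ hammingDist x y

/-- A pair of disjoint sets is a perfect bitrade in `H(n,q)` if every radius-1 ball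
meets both parts in the same number (at most 1) of vertices. -/
def isPerfectBitrade {n q : ℕ} (Tp Tm : Set (HV n q)) : Prop :=
  Disjoint Tp Tm ∧ ∀ x : HV n q,
    (hBall x ∩ Tp).ncard = (hBall x ∩ Tm).ncard ∧ (hBall x ∩ Tp).ncard ≤ 1

/-- The weight of a vertex `x` with respect to a set `A`:
`|S₀(x) ∩ A| + |S₁(x) ∩ A| + (2/n)·|S₂(x) ∩ A|`. -/
noncomputable def wt {n q : ℕ} (A : Set (HV n q)) (x : HV n q) : ℚ :=
  ((hSphere x 0 ∩ A).ncard : ℚ) + ((hSphere x 1 ∩ A).ncard : ℚ)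
    + (2 / (n : ℚ)) * ((hSphere x 2 ∩ A).ncard : ℚ)

/-- Definition 3 (weight definition of extended perfect bitrade). -/
def weightBitrade {n q : ℕ} (Tp Tm : Set (HV n q)) : Prop :=
  Disjoint Tp Tm ∧ ∀ x : HV n q, wt Tp x = wt Tm x ∧ wt Tp x ≤ 1

/-- 0-1 indicator function of a set of vertices. -/
noncomputable def chi {n q : ℕ} (T : Set (HV n q)) (x : HV n q) : ℝ :=
  Set.indicator T (fun _ => (1 : ℝ)) x

/-- The adjacency operator of `H(n,q)`: sum of `f` over the neighbours of `x`. -/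
def nbrSum {n q : ℕ} [NeZero q] {R : Type*} [AddCommMonoid R]
    (f : HV n q → R) (x : HV n q) : R :=
  ∑ y ∈ Finset.univ.filter (fun y => hammingDist x y = 1), f y

/-- The `i`-projection of a code `C ⊆ V(H(m+1,q))`. -/
def proj {m q : ℕ} (i : Fin (m + 1)) (C : Set (HV (m + 1) q)) : Set (HV m q) :=
  {x | ∃ a : ZMod q, i.insertNth a x ∈ C}

/-- Definition 2 (projection definition of extended perfect bitrade). -/
def projBitrade {m q : ℕ} (Tp Tm : Set (HV (m + 1) q)) : Prop :=
  minDistGe Tp 4 ∧ minDistGe Tm 4 ∧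
    ∀ i : Fin (m + 1),
      isPerfectBitrade (proj i Tp \ proj i Tm) (proj i Tm \ proj i Tp)

/-- `f *ᵢ ψ`, where `ψ ≡ 1`: the function `x ↦ ∑ₐ f(xᵃᵢ)` on `H(m,q)`. -/
noncomputable def projFun {m q : ℕ} [NeZero q] (i : Fin (m + 1)) (f : HV (m + 1) q → ℂ)
    (x : HV m q) : ℂ :=
  ∑ a : ZMod q, f (i.insertNth a x)

/-- The cylinder `C_{x,i} = ⋃ₐ B(x + a·eᵢ)`. -/
def cylinder {n q : ℕ} (x : HV n q) (i : Fin n) : Set (HV n q) :=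
  ⋃ a : ZMod q, hBall (Function.update x i (x i + a))

/-- Definition 5 (cylinder definition of extended perfect bitrade). -/
def cylBitrade {n q : ℕ} (Tp Tm : Set (HV n q)) : Prop :=
  ∀ (x : HV n q) (i : Fin n),
    (cylinder x i ∩ Tp).ncard = (cylinder x i ∩ Tm).ncard ∧
      (cylinder x i ∩ Tp).ncard ≤ 1

/-- The matrix `S` from Definition 1. -/
noncomputable def Smat (n q : ℕ) : Matrix (Fin 3) (Fin 3) ℝ :=
  !![0, (n : ℝ) * ((q : ℝ) - 1), 0;
     1, (q : ℝ) - 2, ((n : ℝ) - 1) * ((q : ℝ) - 1);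
     0, (n : ℝ), (n : ℝ) * ((q : ℝ) - 2)]

/-- Definition 1 (matrix definition of extended perfect bitrade), existence of the
matrix `F` with the required properties. -/
def matrixBitrade {n q : ℕ} [NeZero q] (Tp Tm : Set (HV n q)) : Prop :=
  ∃ F : HV n q → Fin 3 → ℝ,
    (∀ x, F x 0 = chi Tp x - chi Tm x) ∧
    (∀ x, ∑ k : Fin 3, F x k = 0) ∧
    (∀ x, ({k : Fin 3 | F x k ≠ 0}).ncard ≤ 2) ∧
    (∀ (x : HV n q) (j : Fin 3),
      nbrSum (fun y => F y j) x = ∑ k : Fin 3, F x k * Smat n q k j)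

/-- Definition 4 (spectral definition of extended perfect bitrade). -/
def spectralBitrade {n q : ℕ} [NeZero q] (Tp Tm : Set (HV n q)) : Prop :=
  minDistGe Tp 4 ∧ minDistGe Tm 4 ∧
    ∃ g h : HV n q → ℝ,
      (∀ x, chi Tp x - chi Tm x = g x + h x) ∧
      (∀ x, nbrSum g x = -(n : ℝ) * g x) ∧
      (∀ x, nbrSum h x = ((q : ℝ) - 2) * h x)


lemma filter_update {n q : ℕ} [NeZero q] (x : HV n q) (i : Fin n) (a : ZMod q)
    (ha : a ≠ x i) :
    (Finset.univ.filter (fun j => x j ≠ Function.update x i a j)) = {i} := by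
  ext j
  simp only [mem_filter, mem_univ, true_and, mem_singleton]
  constructor
  · intro h
    by_contra hj
    rw [Function.update_of_ne hj] at h
    exact h rfl
  · rintro rfl
    rw [Function.update_self]
    exact fun e => ha e.symm

lemma nbrSum_eq {n q : ℕ} [NeZero q] (f : HV n q → ℂ) (x : HV n q) :
    nbrSum f x = ∑ i : Fin n, ∑ a ∈ Finset.univ.erase (x i), f (Function.update x i a) := by
  rw [nbrSum, Finset.sum_sigma']
  refine (Finset.sum_bij (fun p _ => Function.update x p.1 p.2) ?_ ?_ ?_ ?_).symm
  · rintro ⟨i, a⟩ hp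
    simp only [mem_sigma, mem_univ, true_and, mem_erase] at hp
    simp only [mem_filter, mem_univ, true_and, hammingDist, filter_update x i a hp.1]
    simp
  · rintro ⟨i, a⟩ hp ⟨j, b⟩ hq h
    simp only [mem_sigma, mem_univ, true_and, mem_erase] at hp hq
    have hij : i = j := by
      by_contra hij
      have := congrFun h i
      simp only [Function.update_self, Function.update_of_ne hij] at this
      exact hp.1 this
    subst hij
    have := congrFun h i
    simp only [Function.update_self] at this
    simp [this]
  · intro y hy
    simp only [mem_filter, mem_univ, true_and] at hy
    rw [hammingDist, Finset.card_eq_one] at hy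
    obtain ⟨i, hi⟩ := hy
    have hxi : x i ≠ y i := by
      have : i ∈ ({i} : Finset (Fin n)) := mem_singleton_self i
      rw [← hi] at this; simpa using this
    refine ⟨⟨i, y i⟩, by simp [Ne.symm hxi], ?_⟩
    funext j
    by_cases hj : j = i
    · subst hj; simp
    · simp only [Function.update_of_ne hj]
      by_contra h
      have : j ∈ Finset.univ.filter (fun k => x k ≠ y k) := by simpa using h
      rw [hi] at this
      exact hj (mem_singleton.mp this)
  · intros; rfl

/-- here `n = m + 1 ≥ 2`: if `f ≢ 0` is a `λ`-eigenfunction of `H(n,q)`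
with `λ ≠ -n`, then `f *ᵢ ψ ≢ 0` for some coordinate `i`. -/
theorem stmt7 (q m : ℕ) [NeZero q] (hq : 2 ≤ q) (hm : 1 ≤ m)
    (f : HV (m + 1) q → ℂ) (hf : f ≠ 0) (lam : ℂ) (hlam : lam ≠ -((m + 1 : ℕ) : ℂ))
    (heig : ∀ x, nbrSum f x = lam * f x) :
    ∃ i : Fin (m + 1), ∃ x : HV m q, projFun i f x ≠ 0 := by
  by_contra hcon
  push_neg at hcon
  obtain ⟨x, hx⟩ := Function.ne_iff.mp hf
  have hx : f x ≠ 0 := hx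
  have key : nbrSum f x = -((m + 1 : ℕ) : ℂ) * f x := by
    rw [nbrSum_eq]
    have herase : ∀ i : Fin (m + 1),
        ∑ a ∈ Finset.univ.erase (x i), f (Function.update x i a) = -f x := by
      intro i
      have h0 : ∑ a : ZMod q, f (Function.update x i a) = 0 := by
        have := hcon i (i.removeNth x)
        simpa [projFun, Fin.insertNth_removeNth] using this
      have hsum := Finset.add_sum_erase Finset.univ
        (fun a => f (Function.update x i a)) (Finset.mem_univ (x i))
      rw [h0] at hsum
      simp only [Function.update_eq_self] at hsum
      linear_combination hsum
    rw [Finset.sum_congr rfl (fun i _ => herase i)]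
    simp
    ring
  rw [heig x] at key
  apply hlam
  have : (lam + ((m + 1 : ℕ) : ℂ)) * f x = 0 := by linear_combination key
  rcases mul_eq_zero.mp this with h | h
  · linear_combination h
  · exact absurd h hx
end

section
/- Let q ≥ 3 and n ≥ 2. If a pair (T⁺, T⁻) of disjoint subsets of V(H(n,q)) satisfies the spectral definition of extended perfect bitrade (Definition 4), then it satisfies the projection definition (Definition 2): T⁺ and T⁻ have code distance at least 4 and for every coordinate i the i-projection of (T⁺, T⁻) is a perfect bitrade in H(n−1,q). -/
open Finset

lemma hd_insertNth {m q : ℕ} (i : Fin (m + 1)) (a b : ZMod q) (x y : HV m q) :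
    hammingDist (β := fun _ => ZMod q) (i.insertNth a x) (i.insertNth b y)
      = (if a = b then 0 else 1) + hammingDist x y := by
  unfold hammingDist
  rw [Finset.card_filter, Finset.card_filter, Fin.sum_univ_succAbove _ i]
  simp [Fin.insertNth_apply_same, Fin.insertNth_apply_succAbove, eq_comm (a := a)]

lemma nbrSum_insertNth {m q : ℕ} [NeZero q] (g : HV (m + 1) q → ℝ) (i : Fin (m + 1))
    (a : ZMod q) (x : HV m q) :
    nbrSum g (i.insertNth a x)
      = (∑ b ∈ Finset.univ.erase a, g (i.insertNth b x))
        + ∑ y ∈ Finset.univ.filter (fun y => hammingDist x y = 1), g (i.insertNth a y) := by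
  classical
  unfold nbrSum
  rw [Finset.sum_filter]
  rw [← Fintype.sum_equiv (Fin.insertNthEquiv (fun _ => ZMod q) i)
      (fun p => if hammingDist (β := fun _ => ZMod q) (i.insertNth a x)
          (i.insertNth p.1 p.2) = 1 then g (i.insertNth p.1 p.2) else 0)
      (fun z => if hammingDist (i.insertNth a x) z = 1 then g z else 0)
      (fun p => by simp [Fin.insertNthEquiv]; rfl)]
  rw [Fintype.sum_prod_type]
  have key : ∀ b : ZMod q,
      (∑ y : HV m q, if hammingDist (β := fun _ => ZMod q) (i.insertNth a x)
          (i.insertNth b y) = 1 then g (i.insertNth b y) else 0)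
      = if b = a then
          ∑ y ∈ Finset.univ.filter (fun y => hammingDist x y = 1), g (i.insertNth a y)
        else g (i.insertNth b x) := by
    intro b
    by_cases hb : b = a
    · subst hb
      simp only [hd_insertNth, if_pos rfl, zero_add, if_pos, Finset.sum_filter]
    · rw [if_neg hb]
      have : ∀ y : HV m q, (hammingDist (β := fun _ => ZMod q) (i.insertNth a x)
          (i.insertNth b y) = 1) ↔ x = y := by
        intro y
        rw [hd_insertNth, if_neg (fun h => hb h.symm)]
        constructor
        · intro h
          have : hammingDist x y = 0 := by omega
          exact hammingDist_eq_zero.mp this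
        · intro h; subst h; simp
      simp only [this]
      simp
  simp only [key]
  rw [← Finset.add_sum_erase _ _ (Finset.mem_univ a), if_pos rfl]
  rw [add_comm]
  congr 1
  apply Finset.sum_congr rfl
  intro b hb
  rw [if_neg (Finset.ne_of_mem_erase hb)]

lemma hd_update {m q : ℕ} (x : HV m q) (j : Fin m) (c : ZMod q) (h : c ≠ x j) :
    hammingDist x (Function.update x j c) = 1 := by
  unfold hammingDist
  have : ({i | x i ≠ Function.update x j c i} : Finset (Fin m)) = {j} := by
    ext k
    by_cases hk : k = j
    · subst hk; simp [Function.update_self, Ne.symm h]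
    · simp [Function.update_of_ne hk, hk]
  rw [this, Finset.card_singleton]

lemma nbrSum_eq_lines {m q : ℕ} [NeZero q] (G : HV m q → ℝ) (x : HV m q) :
    nbrSum G x = ∑ j : Fin m, ∑ c ∈ Finset.univ.erase (x j), G (Function.update x j c) := by
  classical
  unfold nbrSum
  rw [Finset.sum_sigma']
  refine (Finset.sum_bij (fun (p : Σ _ : Fin m, ZMod q) _ => Function.update x p.1 p.2) ?_ ?_ ?_ ?_).symm
  · intro p hp
    simp only [Finset.mem_sigma, Finset.mem_univ, true_and, Finset.mem_erase] at hp
    simp only [Finset.mem_filter, Finset.mem_univ, true_and]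
    exact hd_update x p.1 p.2 hp.1
  · intro p hp p' hp' heq
    simp only [Finset.mem_sigma, Finset.mem_univ, true_and, Finset.mem_erase] at hp hp'
    obtain ⟨j, c⟩ := p; obtain ⟨j', c'⟩ := p'
    have hjj : j = j' := by
      by_contra hne
      have h1 : Function.update x j c j = Function.update x j' c' j := congrFun heq j
      rw [Function.update_self, Function.update_of_ne (Ne.symm (fun h => hne h.symm))] at h1
      exact hp.1 h1
    subst hjj
    have h2 : Function.update x j c j = Function.update x j c' j := congrFun heq j
    rw [Function.update_self, Function.update_self] at h2
    simp [h2]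
  · intro y hy
    simp only [Finset.mem_filter, Finset.mem_univ, true_and] at hy
    unfold hammingDist at hy
    obtain ⟨j, hj⟩ := Finset.card_eq_one.mp hy
    have hjx : x j ≠ y j := by
      have : j ∈ ({i | x i ≠ y i} : Finset (Fin m)) := hj ▸ Finset.mem_singleton_self j
      simpa using this
    refine ⟨⟨j, y j⟩, ?_, ?_⟩
    · simp only [Finset.mem_sigma, Finset.mem_univ, true_and, Finset.mem_erase]
      exact ⟨Ne.symm hjx, trivial⟩
    · show Function.update x j (y j) = y
      funext k
      by_cases hk : k = j
      · subst hk; simp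
      · rw [Function.update_of_ne hk]
        by_contra hne
        have : k ∈ ({i | x i ≠ y i} : Finset (Fin m)) := by simpa using hne
        rw [hj, Finset.mem_singleton] at this
        exact hk this
  · intro p hp; rfl

noncomputable def lineSum {m q : ℕ} [NeZero q] (G : HV m q → ℝ) (j : Fin m) (x : HV m q) : ℝ :=
  ∑ c : ZMod q, G (Function.update x j c)

lemma lineSum_update {m q : ℕ} [NeZero q] (G : HV m q → ℝ) (j : Fin m) (x : HV m q)
    (c : ZMod q) : lineSum G j (Function.update x j c) = lineSum G j x := by
  unfold lineSum
  apply Finset.sum_congr rfl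
  intro b _
  rw [Function.update_idem]

lemma nbrSum_eq_lineSum {m q : ℕ} [NeZero q] (G : HV m q → ℝ) (x : HV m q) :
    nbrSum G x = (∑ j : Fin m, lineSum G j x) - m * G x := by
  rw [nbrSum_eq_lines]
  unfold lineSum
  have : ∀ j : Fin m, ∑ c ∈ Finset.univ.erase (x j), G (Function.update x j c)
      = (∑ c : ZMod q, G (Function.update x j c)) - G x := by
    intro j
    rw [← Finset.add_sum_erase _ (fun c => G (Function.update x j c)) (Finset.mem_univ (x j))]
    rw [Function.update_eq_self]
    ring
  simp only [this, Finset.sum_sub_distrib, Finset.sum_const, Finset.card_univ,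
    Fintype.card_fin, nsmul_eq_mul]

lemma sum_mul_lineSum_nonneg {m q : ℕ} [NeZero q] (G : HV m q → ℝ) (j : Fin m) :
    0 ≤ ∑ x : HV m q, G x * lineSum G j x := by
  have hq : 0 < (q : ℝ) := by
    have := NeZero.pos q; positivity
  rw [← mul_nonneg_iff_of_pos_left hq]
  have key : (q : ℝ) * ∑ x : HV m q, G x * lineSum G j x = ∑ x : HV m q, (lineSum G j x) ^ 2 := by
    have expand : ∀ x : HV m q, (lineSum G j x) ^ 2
        = ∑ c : ZMod q, G (Function.update x j c) * lineSum G j x := by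
      intro x
      rw [pow_two, ← Finset.sum_mul]
      rfl
    rw [Finset.sum_congr rfl (fun x _ => expand x)]
    rw [← Fintype.sum_prod_type']
    -- involution φ (x,c) = (update x j c, x j)
    have hinv : Function.Involutive
        (fun p : HV m q × ZMod q => (Function.update p.1 j p.2, p.1 j)) := by
      intro p
      simp [Function.update_idem, Function.update_eq_self]
    rw [← Fintype.sum_equiv hinv.toPerm
        (fun p : HV m q × ZMod q => G p.1 * lineSum G j p.1)
        (fun p : HV m q × ZMod q => G (Function.update p.1 j p.2) * lineSum G j p.1)
        (fun p => by
          simp only [Function.Involutive.coe_toPerm]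
          rw [Function.update_idem, Function.update_eq_self, lineSum_update])]
    rw [Fintype.sum_prod_type]
    simp only [Finset.sum_const, Finset.card_univ, ZMod.card, nsmul_eq_mul]
    rw [Finset.mul_sum]
  rw [key]
  positivity

lemma eig_below_zero {m q : ℕ} [NeZero q] (G : HV m q → ℝ)
    (hG : ∀ x, nbrSum G x = (-(m : ℝ) - q) * G x) : ∀ x, G x = 0 := by
  have hq : 0 < (q : ℝ) := by have := NeZero.pos q; positivity
  have key : ∑ x : HV m q, G x * nbrSum G x
      = (∑ j : Fin m, ∑ x : HV m q, G x * lineSum G j x) - m * ∑ x : HV m q, (G x) ^ 2 := by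
    simp only [nbrSum_eq_lineSum, mul_sub, Finset.mul_sum, Finset.sum_sub_distrib]
    rw [Finset.sum_comm]
    congr 1
    · apply Finset.sum_congr rfl; intro x _; ring
  have lhs : ∑ x : HV m q, G x * nbrSum G x = (-(m : ℝ) - q) * ∑ x : HV m q, (G x) ^ 2 := by
    rw [Finset.mul_sum]
    apply Finset.sum_congr rfl
    intro x _
    rw [hG x]; ring
  have hnn : (0 : ℝ) ≤ ∑ j : Fin m, ∑ x : HV m q, G x * lineSum G j x :=
    Finset.sum_nonneg fun j _ => sum_mul_lineSum_nonneg G j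
  have hsq : (0 : ℝ) ≤ ∑ x : HV m q, (G x) ^ 2 :=
    Finset.sum_nonneg fun x _ => sq_nonneg _
  have : (-(m : ℝ) - q) * ∑ x : HV m q, (G x) ^ 2
      ≥ - m * ∑ x : HV m q, (G x) ^ 2 := by
    rw [← lhs] at *
    rw [key]
    nlinarith [hnn]
  have hzero : ∑ x : HV m q, (G x) ^ 2 = 0 := by nlinarith
  intro x
  have := (Finset.sum_eq_zero_iff_of_nonneg (fun y _ => sq_nonneg (G y))).mp hzero x
    (Finset.mem_univ x)
  exact pow_eq_zero_iff (by norm_num) |>.mp this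

/-- projection of a function -/
noncomputable def projF {m q : ℕ} [NeZero q] (i : Fin (m + 1)) (g : HV (m + 1) q → ℝ)
    (x : HV m q) : ℝ :=
  ∑ a : ZMod q, g (i.insertNth a x)

lemma nbrSum_projF {m q : ℕ} [NeZero q] (i : Fin (m + 1)) (g : HV (m + 1) q → ℝ)
    (lam : ℝ) (hg : ∀ z, nbrSum g z = lam * g z) (x : HV m q) :
    nbrSum (projF i g) x = (lam - (q - 1)) * projF i g x := by
  have sum_eq : ∑ a : ZMod q, nbrSum g (i.insertNth a x)
      = ((q : ℝ) - 1) * projF i g x + nbrSum (projF i g) x := by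
    have : ∀ a : ZMod q, nbrSum g (i.insertNth a x)
        = (∑ b ∈ Finset.univ.erase a, g (i.insertNth b x))
          + ∑ y ∈ Finset.univ.filter (fun y => hammingDist x y = 1), g (i.insertNth a y) :=
      fun a => nbrSum_insertNth g i a x
    rw [Finset.sum_congr rfl (fun a _ => this a), Finset.sum_add_distrib]
    congr 1
    · -- ∑ a, ∑ b ≠ a, g (x^b) = (q-1) * projF
      have : ∀ a : ZMod q, ∑ b ∈ Finset.univ.erase a, g (i.insertNth b x)
          = projF i g x - g (i.insertNth a x) := by
        intro a
        unfold projF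
        rw [← Finset.add_sum_erase _ (fun b => g (i.insertNth b x)) (Finset.mem_univ a)]
        ring
      rw [Finset.sum_congr rfl (fun a _ => this a), Finset.sum_sub_distrib]
      simp only [Finset.sum_const, Finset.card_univ, ZMod.card, nsmul_eq_mul]
      unfold projF
      ring
    · -- swap sums
      unfold nbrSum projF
      rw [Finset.sum_comm]
  have lhs : ∑ a : ZMod q, nbrSum g (i.insertNth a x) = lam * projF i g x := by
    rw [Finset.sum_congr rfl (fun a _ => hg (i.insertNth a x)), ← Finset.mul_sum]
    rfl
  rw [lhs] at sum_eq
  linarith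

open Classical in
lemma projF_chi {m q : ℕ} [NeZero q] (i : Fin (m + 1)) (T : Set (HV (m + 1) q))
    (hT : minDistGe T 4) (x : HV m q) :
    projF i (chi T) x = if x ∈ proj i T then 1 else 0 := by
  classical
  unfold projF chi
  rw [Finset.sum_congr rfl (fun a _ => Set.indicator_apply T _ _)]
  rw [Finset.sum_ite, Finset.sum_const_zero, add_zero, Finset.sum_const, nsmul_eq_mul, mul_one]
  have hcard : (Finset.univ.filter (fun a : ZMod q => (i.insertNth a x : HV (m+1) q) ∈ T)).card ≤ 1 := by
    rw [Finset.card_le_one]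
    intro a ha b hb
    simp only [Finset.mem_filter] at ha hb
    by_contra hab
    have hne : (i.insertNth a x : HV (m+1) q) ≠ i.insertNth b x := by
      intro hh
      apply hab
      have := congrFun hh i
      simpa using this
    have := hT _ ha.2 _ hb.2 hne
    rw [hd_insertNth, if_neg hab, hammingDist_self] at this
    omega
  by_cases hx : x ∈ proj i T
  · rw [if_pos hx]
    obtain ⟨a, ha⟩ := hx
    have hmem : a ∈ Finset.univ.filter (fun a : ZMod q => (i.insertNth a x : HV (m+1) q) ∈ T) := by
      simp [ha]
    have h1 : 1 ≤ (Finset.univ.filter (fun a : ZMod q => (i.insertNth a x : HV (m+1) q) ∈ T)).card :=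
      Finset.card_pos.mpr ⟨a, hmem⟩
    have : (Finset.univ.filter (fun a : ZMod q => (i.insertNth a x : HV (m+1) q) ∈ T)).card = 1 := le_antisymm hcard h1
    rw [this]; norm_num
  · rw [if_neg hx]
    have : Finset.univ.filter (fun a : ZMod q => (i.insertNth a x : HV (m+1) q) ∈ T) = ∅ := by
      rw [Finset.filter_eq_empty_iff]
      intro a _
      exact fun hmem => hx ⟨a, hmem⟩
    rw [this]; norm_num

noncomputable def ballF {m q : ℕ} [NeZero q] (x : HV m q) : Finset (HV m q) :=
  insert x (Finset.univ.filter (fun y => hammingDist x y = 1))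

lemma sum_ballF {m q : ℕ} [NeZero q] (F : HV m q → ℝ) (x : HV m q) :
    ∑ y ∈ ballF x, F y = F x + nbrSum F x := by
  unfold ballF nbrSum
  rw [Finset.sum_insert]
  simp

lemma mem_ballF {m q : ℕ} [NeZero q] (x y : HV m q) :
    y ∈ ballF x ↔ hammingDist x y ≤ 1 := by
  unfold ballF
  simp only [Finset.mem_insert, Finset.mem_filter, Finset.mem_univ, true_and]
  constructor
  · rintro (rfl | h)
    · simp
    · omega
  · intro h
    interval_cases hd : hammingDist x y
    · exact Or.inl (hammingDist_eq_zero.mp hd).symm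
    · exact Or.inr rfl

open Classical in
lemma ncard_ball_inter {m q : ℕ} [NeZero q] (x : HV m q) (S : Set (HV m q)) :
    (hBall x ∩ S).ncard = ((ballF x).filter (· ∈ S)).card := by
  have : hBall x ∩ S = ↑((ballF x).filter (· ∈ S)) := by
    ext z
    simp only [Set.mem_inter_iff, Finset.coe_filter, Set.mem_setOf_eq, mem_ballF]
    exact ⟨fun ⟨h1, h2⟩ => ⟨h1, h2⟩, fun ⟨h1, h2⟩ => ⟨h1, h2⟩⟩
  rw [this, Set.ncard_coe_finset]

open Classical in
lemma ncard_ball_inter_sdiff {m q : ℕ} [NeZero q] (x : HV m q) (S S' : Set (HV m q)) :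
    (hBall x ∩ (S \ S')).ncard
      = (((ballF x).filter (· ∈ S)) \ ((ballF x).filter (· ∈ S'))).card := by
  have : hBall x ∩ (S \ S')
      = ↑((((ballF x).filter (· ∈ S)) \ ((ballF x).filter (· ∈ S')))) := by
    ext z
    simp only [Set.mem_inter_iff, Set.mem_diff, Finset.coe_sdiff, Finset.coe_filter,
      Set.mem_setOf_eq, mem_ballF, Set.mem_diff]
    constructor
    · rintro ⟨h1, h2, h3⟩; exact ⟨⟨h1, h2⟩, fun hc => h3 hc.2⟩
    · rintro ⟨⟨h1, h2⟩, h3⟩; exact ⟨h1, h2, fun hc => h3 ⟨h1, hc⟩⟩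
  rw [this, Set.ncard_coe_finset]

theorem stmt12' (q m : ℕ) [NeZero q] (hq : 3 ≤ q) (hm : 1 ≤ m)
    (Tp Tm : Set (HV (m + 1) q)) (hdisj : Disjoint Tp Tm)
    (hTp4 : minDistGe Tp 4) (hTm4 : minDistGe Tm 4)
    (g0 h0 : HV (m + 1) q → ℝ)
    (hfun : ∀ x, chi Tp x - chi Tm x = g0 x + h0 x)
    (hg : ∀ x, nbrSum g0 x = -((m : ℝ) + 1) * g0 x)
    (hh : ∀ x, nbrSum h0 x = ((q : ℝ) - 2) * h0 x)
    (i : Fin (m + 1)) :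
    isPerfectBitrade (proj i Tp \ proj i Tm) (proj i Tm \ proj i Tp) := by
  classical
  -- projections of eigenfunctions
  have hgeig : ∀ x, nbrSum (projF i g0) x = (-(m : ℝ) - q) * projF i g0 x := by
    intro x
    rw [nbrSum_projF i g0 (-((m : ℝ) + 1)) hg x]
    ring_nf
  have hG0 : ∀ x, projF i g0 x = 0 := eig_below_zero _ hgeig
  have hheig : ∀ x, nbrSum (projF i h0) x = -projF i h0 x := by
    intro x
    rw [nbrSum_projF i h0 ((q : ℝ) - 2) hh x]
    ring_nf
  -- key sum over balls
  have hkey : ∀ x : HV m q,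
      ∑ y ∈ ballF x, (projF i (chi Tp) y - projF i (chi Tm) y) = 0 := by
    intro x
    have hpt : ∀ y, projF i (chi Tp) y - projF i (chi Tm) y = projF i g0 y + projF i h0 y := by
      intro y
      unfold projF
      rw [← Finset.sum_sub_distrib, ← Finset.sum_add_distrib]
      exact Finset.sum_congr rfl fun a _ => hfun _
    rw [Finset.sum_congr rfl fun y _ => hpt y, Finset.sum_add_distrib,
      sum_ballF, sum_ballF, hgeig, hheig, hG0]
    ring
  -- counting
  have hcount : ∀ x : HV m q,
      (((ballF x).filter (· ∈ proj i Tp)).card : ℝ) = ((ballF x).filter (· ∈ proj i Tm)).card := by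
    intro x
    have := hkey x
    rw [Finset.sum_sub_distrib] at this
    rw [Finset.sum_congr rfl (fun y _ => projF_chi i Tp hTp4 y),
        Finset.sum_congr rfl (fun y _ => projF_chi i Tm hTm4 y)] at this
    rw [Finset.sum_boole, Finset.sum_boole] at this
    simpa [sub_eq_zero] using this
  have hcountN : ∀ x : HV m q,
      ((ballF x).filter (· ∈ proj i Tp)).card = ((ballF x).filter (· ∈ proj i Tm)).card := by
    intro x; exact_mod_cast hcount x
  have hle1 : ∀ (x : HV m q) (T : Set (HV (m+1) q)), minDistGe T 4 →
      ((ballF x).filter (· ∈ proj i T)).card ≤ 1 := by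
    intro x T hT4
    rw [Finset.card_le_one]
    intro y hy y' hy'
    simp only [Finset.mem_filter] at hy hy'
    obtain ⟨hyb, a, ha⟩ := hy
    obtain ⟨hyb', a', ha'⟩ := hy'
    by_contra hne
    have hzne : (i.insertNth a y : HV (m+1) q) ≠ i.insertNth a' y' := by
      intro hh
      apply hne
      funext j
      have := congrFun hh (i.succAbove j)
      simpa [Fin.insertNth_apply_succAbove] using this
    have h4 := hT4 _ ha _ ha' hzne
    rw [hd_insertNth] at h4
    have hdy : hammingDist y y' ≤ 2 := by
      have t := hammingDist_triangle y x y'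
      rw [hammingDist_comm y x] at t
      have := (mem_ballF x y).mp hyb
      have := (mem_ballF x y').mp hyb'
      omega
    split at h4 <;> omega
  constructor
  · exact disjoint_sdiff_sdiff
  · intro x
    rw [ncard_ball_inter_sdiff, ncard_ball_inter_sdiff]
    have hAB := hcountN x
    have hA1 := hle1 x Tp hTp4
    have c1 := Finset.card_sdiff_add_card_inter
      ((ballF x).filter (· ∈ proj i Tp)) ((ballF x).filter (· ∈ proj i Tm))
    have c2 := Finset.card_sdiff_add_card_inter
      ((ballF x).filter (· ∈ proj i Tm)) ((ballF x).filter (· ∈ proj i Tp))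
    rw [Finset.inter_comm] at c2
    omega

/-- here `n = m + 1 ≥ 2`: the spectral definition (Definition 4) implies
the projection definition (Definition 2). -/
theorem stmt12 (q m : ℕ) [NeZero q] (hq : 3 ≤ q) (hm : 1 ≤ m)
    (Tp Tm : Set (HV (m + 1) q)) (hdisj : Disjoint Tp Tm)
    (h : spectralBitrade Tp Tm) :
    projBitrade Tp Tm := by
  obtain ⟨hTp4, hTm4, g0, h0, hfun, hg, hh⟩ := h
  refine ⟨hTp4, hTm4, fun i => ?_⟩
  exact stmt12' q m hq hm Tp Tm hdisj hTp4 hTm4 g0 h0 hfun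
    (fun x => by rw [hg x]; push_cast; ring) hh i
end

section
/- Let q ≥ 3 and n ≥ 2. If a pair (T⁺, T⁻) of disjoint subsets of V(H(n,q)) satisfies the projection definition of extended perfect bitrade (Definition 2), i.e., T⁺ and T⁻ have code distance at least 4 and every i-projection of (T⁺, T⁻) is a perfect bitrade in H(n−1,q), then it satisfies the spectral definition (Definition 4): the function f = χ_{T⁺} − χ_{T⁻} can be written as f = g + h with Ag = −n·g and Ah = (q−2)·h, where A is the adjacency operator of H(n,q). -/
open Finset

section Aux

open Finset

variable {n q : ℕ} [NeZero q]

private lemma hd_update_eq_one (x : HV n q) (i : Fin n) (a : ZMod q) (ha : a ≠ x i) :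
    hammingDist x (Function.update x i a) = 1 := by
  unfold hammingDist
  rw [Finset.card_eq_one]
  refine ⟨i, ?_⟩
  ext j
  simp only [Finset.mem_filter, Finset.mem_univ, true_and, Finset.mem_singleton]
  rcases eq_or_ne j i with rfl | hj
  · simp [Ne.symm ha]
  · simpa [Function.update_of_ne hj] using hj

private lemma nbrSum_eq_sum_update (f : HV n q → ℝ) (x : HV n q) :
    nbrSum f x = ∑ i : Fin n, ∑ a ∈ Finset.univ.erase (x i), f (Function.update x i a) := by
  rw [nbrSum, Finset.sum_sigma']
  refine (Finset.sum_bij (fun p _ => Function.update x p.1 p.2) ?_ ?_ ?_ ?_).symm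
  · rintro ⟨i, a⟩ hp
    simp only [Finset.mem_sigma, Finset.mem_univ, Finset.mem_erase, true_and] at hp
    simp only [Finset.mem_filter, Finset.mem_univ, true_and]
    exact hd_update_eq_one x i a hp.1
  · rintro ⟨i, a⟩ hp ⟨j, b⟩ hq2 hpq
    simp only [Finset.mem_sigma, Finset.mem_univ, Finset.mem_erase, true_and] at hp hq2
    dsimp only at hpq
    rcases eq_or_ne i j with rfl | hij
    · have hab : a = b := by
        have := congrFun hpq i; simpa using this
      subst hab; rfl
    · exfalso
      have h1 := congrFun hpq i
      rw [Function.update_self, Function.update_of_ne hij] at h1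
      exact hp.1 h1
  · intro y hy
    simp only [Finset.mem_filter, Finset.mem_univ, true_and] at hy
    unfold hammingDist at hy
    obtain ⟨i, hi⟩ := Finset.card_eq_one.mp hy
    obtain ⟨hmem, huniq⟩ := Finset.eq_singleton_iff_unique_mem.mp hi
    simp only [Finset.mem_filter, Finset.mem_univ, true_and] at hmem
    have hforall : ∀ j, j ≠ i → x j = y j := by
      intro j hj
      by_contra hc
      exact hj (by
        have : j ∈ Finset.filter (fun k => x k ≠ y k) Finset.univ := by
          simp only [Finset.mem_filter, Finset.mem_univ, true_and]; exact hc
        have := huniq j this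
        exact this)
    refine ⟨⟨i, y i⟩, ?_, ?_⟩
    · simp only [Finset.mem_sigma, Finset.mem_univ, Finset.mem_erase, true_and]
      exact ⟨Ne.symm hmem, trivial⟩
    · ext j
      rcases eq_or_ne j i with rfl | hj
      · simp
      · simp [Function.update_of_ne hj, hforall j hj]
  · intro p _; rfl

private lemma sum_erase_swap {N : ℕ} (K : Fin N → Fin N → ℝ) :
    ∑ i, ∑ j ∈ Finset.univ.erase i, K i j = ∑ j, ∑ i ∈ Finset.univ.erase j, K i j := by
  have h1 : ∀ i : Fin N, ∑ j ∈ Finset.univ.erase i, K i j = (∑ j, K i j) - K i i :=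
    fun i => Finset.sum_erase_eq_sub (Finset.mem_univ i)
  have h2 : ∀ j : Fin N, ∑ i ∈ Finset.univ.erase j, K i j = (∑ i, K i j) - K j j :=
    fun j => Finset.sum_erase_eq_sub (Finset.mem_univ j)
  simp only [h1, h2, Finset.sum_sub_distrib]
  rw [Finset.sum_comm]

private lemma sum_erase_succAbove {N : ℕ} (i : Fin (N + 1)) (g : Fin (N + 1) → ℝ) :
    ∑ j ∈ Finset.univ.erase i, g j = ∑ j' : Fin N, g (i.succAbove j') := by
  have h := Fin.sum_univ_succAbove g i
  have h2 : ∑ j ∈ Finset.univ.erase i, g j = (∑ j, g j) - g i :=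
    Finset.sum_erase_eq_sub (Finset.mem_univ i)
  rw [h2, h]; ring

private lemma removeNth_update_succAbove {N : ℕ} (i : Fin (N + 1)) (j : Fin N) (b : ZMod q)
    (x : HV (N + 1) q) :
    i.removeNth (Function.update x (i.succAbove j) b) = Function.update (i.removeNth x) j b := by
  funext k
  show Function.update x (i.succAbove j) b (i.succAbove k)
      = Function.update (i.removeNth x) j b k
  rcases eq_or_ne k j with rfl | hk
  · simp
  · rw [Function.update_of_ne (fun hc => hk (Fin.succAbove_right_injective hc)),
      Function.update_of_ne hk]
    rfl

private lemma sum_chi (s : Finset (HV n q)) (S : Set (HV n q)) :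
    ∑ w ∈ s, chi S w = (((s : Set (HV n q)) ∩ S).ncard : ℝ) := by
  classical
  have h2 : ∀ w ∈ s.filter (· ∈ S), chi S w = 1 :=
    fun w hw => Set.indicator_of_mem (Finset.mem_filter.mp hw).2 _
  have h3 : ∀ w ∈ s.filter (fun w => ¬ w ∈ S), chi S w = 0 :=
    fun w hw => Set.indicator_of_notMem (Finset.mem_filter.mp hw).2 _
  rw [← Finset.sum_filter_add_sum_filter_not s (· ∈ S), Finset.sum_congr rfl h2,
    Finset.sum_congr rfl h3]
  have h1 : ((s : Set (HV n q)) ∩ S) = ↑(s.filter (· ∈ S)) := by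
    ext w; simp [and_comm]
  rw [h1, Set.ncard_coe_finset]
  simp

private lemma ball_sum_split (z : HV n q) (G : HV n q → ℝ) :
    ∑ w ∈ Finset.univ.filter (fun w => hammingDist z w ≤ 1), G w = G z + nbrSum G z := by
  have hset : Finset.univ.filter (fun w : HV n q => hammingDist z w ≤ 1)
      = insert z (Finset.univ.filter fun w => hammingDist z w = 1) := by
    ext w
    simp only [Finset.mem_filter, Finset.mem_univ, true_and, Finset.mem_insert]
    constructor
    · intro hw
      rcases Nat.le_one_iff_eq_zero_or_eq_one.mp hw with h0 | h1
      · exact Or.inl (hammingDist_eq_zero.mp h0).symm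
      · exact Or.inr h1
    · rintro (rfl | h1)
      · simp
      · omega
  rw [hset, Finset.sum_insert (by simp)]
  rfl

private lemma hd_insertNth_le {N : ℕ} (i : Fin (N + 1)) (a b : ZMod q) (z : HV N q) :
    hammingDist (i.insertNth (α := fun _ => ZMod q) a z)
      (i.insertNth (α := fun _ => ZMod q) b z) ≤ 1 := by
  unfold hammingDist
  apply Finset.card_le_one.mpr
  intro j hj k hk
  simp only [Finset.mem_filter, Finset.mem_univ, true_and] at hj hk
  have hji : j = i := by
    by_contra hji
    obtain ⟨u, hu⟩ := Fin.exists_succAbove_eq hji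
    rw [← hu] at hj; simp at hj
  have hki : k = i := by
    by_contra hki
    obtain ⟨u, hu⟩ := Fin.exists_succAbove_eq hki
    rw [← hu] at hk; simp at hk
  rw [hji, hki]

open Classical in
private lemma sum_chi_insertNth {N : ℕ} {S : Set (HV (N + 1) q)} (hS : minDistGe S 4)
    (i : Fin (N + 1)) (z : HV N q) :
    ∑ a : ZMod q, chi S (i.insertNth (α := fun _ => ZMod q) a z)
      = if z ∈ proj i S then (1 : ℝ) else 0 := by
  classical
  by_cases hz : z ∈ proj i S
  · obtain ⟨a0, ha0⟩ := hz
    rw [if_pos ⟨a0, ha0⟩]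
    rw [Finset.sum_eq_single a0]
    · exact Set.indicator_of_mem ha0 _
    · intro b _ hb
      have hbm : i.insertNth (α := fun _ => ZMod q) b z ∉ S := by
        intro hbmem
        have hne : i.insertNth (α := fun _ => ZMod q) b z
            ≠ i.insertNth (α := fun _ => ZMod q) a0 z := by
          intro hc
          exact hb (by simpa using congrFun hc i)
        have h4 := hS _ hbmem _ ha0 hne
        have h1 := hd_insertNth_le i b a0 z
        omega
      exact Set.indicator_of_notMem hbm _
    · simp
  · rw [if_neg hz]
    refine Finset.sum_eq_zero fun a _ => ?_
    exact Set.indicator_of_notMem (fun hmem => hz ⟨a, hmem⟩) _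

private lemma nbrSum_lin (a b : ℝ) (u v : HV n q → ℝ) (x : HV n q) :
    nbrSum (fun y => a * u y + b * v y) x = a * nbrSum u x + b * nbrSum v x := by
  simp [nbrSum, Finset.mul_sum, Finset.sum_add_distrib]

end Aux

/-- here `n = m + 1 ≥ 2`: the projection definition (Definition 2) implies
the spectral decomposition of Definition 4: `χ₊ - χ₋ = g + h` with `Ag = -n·g` and
`Ah = (q-2)·h`. -/
theorem stmt13 (q m : ℕ) [NeZero q] (hq : 3 ≤ q) (hm : 1 ≤ m)
    (Tp Tm : Set (HV (m + 1) q)) (hdisj : Disjoint Tp Tm)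
    (h : projBitrade Tp Tm) :
    ∃ g h' : HV (m + 1) q → ℝ,
      (∀ x, chi Tp x - chi Tm x = g x + h' x) ∧
      (∀ x, nbrSum g x = -((m + 1 : ℕ) : ℝ) * g x) ∧
      (∀ x, nbrSum h' x = ((q : ℝ) - 2) * h' x) := by
  classical
  obtain ⟨hdp, hdm, hproj⟩ := h
  set f : HV (m + 1) q → ℝ := fun x => chi Tp x - chi Tm x with hf
  -- Step 1: per-projection ball identity
  have key1 : ∀ (i : Fin (m + 1)) (z : HV m q),
      (∑ a : ZMod q, f (i.insertNth a z))
        + nbrSum (fun w => ∑ a : ZMod q, f (i.insertNth a w)) z = 0 := by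
    intro i z
    have hrep : ∀ w : HV m q, (∑ a : ZMod q, f (i.insertNth a w)) =
        chi (proj i Tp \ proj i Tm) w - chi (proj i Tm \ proj i Tp) w := by
      intro w
      have h1 := sum_chi_insertNth hdp i w
      have h2 := sum_chi_insertNth hdm i w
      have h3 : (∑ a : ZMod q, f (i.insertNth a w))
          = (∑ a : ZMod q, chi Tp (i.insertNth a w))
            - ∑ a : ZMod q, chi Tm (i.insertNth a w) := by
        rw [← Finset.sum_sub_distrib]
      rw [h3, h1, h2]
      by_cases hp : w ∈ proj i Tp <;> by_cases hm' : w ∈ proj i Tm <;>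
        simp [chi, Set.indicator_apply, Set.mem_diff, hp, hm']
    have hball := (hproj i).2 z
    have hsum0 : ∑ w ∈ Finset.univ.filter (fun w : HV m q => hammingDist z w ≤ 1),
        (∑ a : ZMod q, f (i.insertNth a w)) = 0 := by
      rw [Finset.sum_congr rfl (fun w _ => hrep w), Finset.sum_sub_distrib, sum_chi, sum_chi]
      have hset : (↑(Finset.univ.filter (fun w : HV m q => hammingDist z w ≤ 1)) : Set (HV m q))
          = hBall z := by
        ext w; simp [hBall]
      rw [hset, hball.1]
      ring
    have hsplit := ball_sum_split z (fun w => ∑ a : ZMod q, f (i.insertNth a w))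
    rw [hsum0] at hsplit
    exact hsplit.symm
  -- Step 2: translate to H(m+1,q)
  have key2 : ∀ (i : Fin (m + 1)) (x : HV (m + 1) q),
      (∑ a : ZMod q, f (Function.update x i a))
        + ∑ j ∈ Finset.univ.erase i, ∑ b ∈ Finset.univ.erase (x j),
            ∑ a : ZMod q, f (Function.update (Function.update x i a) j b) = 0 := by
    intro i x
    have hk := key1 i (i.removeNth x)
    have e1 : (∑ a : ZMod q, f (i.insertNth a (i.removeNth x)))
        = ∑ a : ZMod q, f (Function.update x i a) := by
      refine Finset.sum_congr rfl fun a _ => ?_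
      rw [Fin.insertNth_removeNth]
    have e2 : nbrSum (fun w => ∑ a : ZMod q, f (i.insertNth a w)) (i.removeNth x)
        = ∑ j ∈ Finset.univ.erase i, ∑ b ∈ Finset.univ.erase (x j),
            ∑ a : ZMod q, f (Function.update (Function.update x i a) j b) := by
      rw [nbrSum_eq_sum_update,
        sum_erase_succAbove i (fun j => ∑ b ∈ Finset.univ.erase (x j),
          ∑ a : ZMod q, f (Function.update (Function.update x i a) j b))]
      refine Finset.sum_congr rfl fun j' _ => ?_
      refine Finset.sum_congr rfl fun b hb => ?_
      rw [← removeNth_update_succAbove i j' b x]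
      refine Finset.sum_congr rfl fun a _ => ?_
      rw [Fin.insertNth_removeNth, Function.update_comm (Fin.succAbove_ne i j')]
    rw [e1, e2] at hk
    exact hk
  -- Step 3: summed identity
  have key3 : ∀ x : HV (m + 1) q,
      (∑ i, ∑ a : ZMod q, f (Function.update x i a))
        + ∑ i, ∑ j ∈ Finset.univ.erase i, ∑ b ∈ Finset.univ.erase (x j),
            ∑ a : ZMod q, f (Function.update (Function.update x i a) j b) = 0 := by
    intro x
    rw [← Finset.sum_add_distrib]
    exact Finset.sum_eq_zero fun i _ => key2 i x
  -- Step 4: U = (m+1)·id + A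
  have hU : ∀ (g : HV (m + 1) q → ℝ) (x : HV (m + 1) q),
      (∑ i, ∑ a : ZMod q, g (Function.update x i a))
        = ((m : ℝ) + 1) * g x + nbrSum g x := by
    intro g x
    rw [nbrSum_eq_sum_update]
    have hsplit : ∀ i : Fin (m + 1), (∑ a : ZMod q, g (Function.update x i a))
        = g x + ∑ a ∈ Finset.univ.erase (x i), g (Function.update x i a) := by
      intro i
      rw [← Finset.add_sum_erase _ _ (Finset.mem_univ (x i)), Function.update_eq_self]
    rw [Finset.sum_congr rfl (fun i _ => hsplit i), Finset.sum_add_distrib, Finset.sum_const,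
      Finset.card_univ, Fintype.card_fin, nsmul_eq_mul]
    push_cast
    ring
  have hcard : ((Finset.univ : Finset (ZMod q)).card : ℝ) = q := by
    rw [Finset.card_univ, ZMod.card]
  -- Step 5: U² = (q + (m+1) - 2)·U on f
  have hUU : ∀ x : HV (m + 1) q,
      (∑ j, ∑ b : ZMod q, (∑ i, ∑ a : ZMod q,
          f (Function.update (Function.update x j b) i a)))
        = ((q : ℝ) + ((m : ℝ) + 1) - 2)
            * (∑ i, ∑ a : ZMod q, f (Function.update x i a)) := by
    intro x
    have step1 : ∀ (j : Fin (m + 1)) (b : ZMod q),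
        (∑ i, ∑ a : ZMod q, f (Function.update (Function.update x j b) i a))
          = (∑ a : ZMod q, f (Function.update x j a))
            + ∑ i ∈ Finset.univ.erase j, ∑ a : ZMod q,
                f (Function.update (Function.update x j b) i a) := by
      intro j b
      rw [← Finset.add_sum_erase _ _ (Finset.mem_univ j)]
      congr 1
      exact Finset.sum_congr rfl fun a _ => by rw [Function.update_idem]
    have hswap := sum_erase_swap (fun i j => ∑ b ∈ Finset.univ.erase (x j),
      ∑ a : ZMod q, f (Function.update (Function.update x i a) j b))
    have hK := key3 x
    calc (∑ j, ∑ b : ZMod q, (∑ i, ∑ a : ZMod q,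
            f (Function.update (Function.update x j b) i a)))
        = ∑ j, ∑ b : ZMod q, ((∑ a : ZMod q, f (Function.update x j a))
            + ∑ i ∈ Finset.univ.erase j, ∑ a : ZMod q,
                f (Function.update (Function.update x j b) i a)) :=
          Finset.sum_congr rfl fun j _ => Finset.sum_congr rfl fun b _ => step1 j b
      _ = (q : ℝ) * (∑ j, ∑ a : ZMod q, f (Function.update x j a))
          + ∑ j, ∑ i ∈ Finset.univ.erase j, ∑ b : ZMod q, ∑ a : ZMod q,
              f (Function.update (Function.update x j b) i a) := by
          simp only [Finset.sum_add_distrib]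
          congr 1
          · rw [Finset.mul_sum]
            exact Finset.sum_congr rfl fun j _ => by
              rw [Finset.sum_const, nsmul_eq_mul, hcard]
          · exact Finset.sum_congr rfl fun j _ => Finset.sum_comm
      _ = (q : ℝ) * (∑ j, ∑ a : ZMod q, f (Function.update x j a))
          + ∑ j, ∑ i ∈ Finset.univ.erase j, ((∑ a : ZMod q, f (Function.update x i a))
              + ∑ b ∈ Finset.univ.erase (x j), ∑ a : ZMod q,
                  f (Function.update (Function.update x i a) j b)) := by
          congr 1
          refine Finset.sum_congr rfl fun j _ => Finset.sum_congr rfl fun i hi => ?_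
          have hij : i ≠ j := (Finset.mem_erase.mp hi).1
          rw [← Finset.add_sum_erase _ _ (Finset.mem_univ (x j))]
          congr 1
          · exact Finset.sum_congr rfl fun a _ => by rw [Function.update_eq_self]
          · exact Finset.sum_congr rfl fun b _ => Finset.sum_congr rfl fun a _ => by
              rw [Function.update_comm (Ne.symm hij)]
      _ = (q : ℝ) * (∑ j, ∑ a : ZMod q, f (Function.update x j a))
          + ((∑ j : Fin (m + 1), ((∑ i, ∑ a : ZMod q, f (Function.update x i a))
                - ∑ a : ZMod q, f (Function.update x j a)))
            + ∑ j, ∑ i ∈ Finset.univ.erase j, ∑ b ∈ Finset.univ.erase (x j),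
                ∑ a : ZMod q, f (Function.update (Function.update x i a) j b)) := by
          congr 1
          rw [← Finset.sum_add_distrib]
          refine Finset.sum_congr rfl fun j _ => ?_
          rw [Finset.sum_add_distrib]
          congr 1
          exact Finset.sum_erase_eq_sub (Finset.mem_univ j)
      _ = ((q : ℝ) + ((m : ℝ) + 1) - 2)
            * (∑ i, ∑ a : ZMod q, f (Function.update x i a)) := by
          rw [← hswap] at *
          have hsum1 : (∑ j : Fin (m + 1), ((∑ i, ∑ a : ZMod q, f (Function.update x i a))
                - ∑ a : ZMod q, f (Function.update x j a)))
              = ((m : ℝ) + 1) * (∑ i, ∑ a : ZMod q, f (Function.update x i a))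
                - (∑ i, ∑ a : ZMod q, f (Function.update x i a)) := by
            rw [Finset.sum_sub_distrib, Finset.sum_const, Finset.card_univ, Fintype.card_fin,
              nsmul_eq_mul]
            push_cast
            ring
          rw [hsum1]
          linarith [hK]
  -- Step 6: A² f = (q-2-(m+1))·A f + (m+1)(q-2)·f
  have hA2 : ∀ x : HV (m + 1) q, nbrSum (nbrSum f) x
      = ((q : ℝ) - 2 - ((m : ℝ) + 1)) * nbrSum f x
        + ((m : ℝ) + 1) * ((q : ℝ) - 2) * f x := by
    intro x
    have h1 := hUU x
    have h2 := hU (fun y => ∑ i, ∑ a : ZMod q, f (Function.update y i a)) x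
    have h3 : nbrSum (fun y => ∑ i, ∑ a : ZMod q, f (Function.update y i a)) x
        = ((m : ℝ) + 1) * nbrSum f x + 1 * nbrSum (nbrSum f) x := by
      have hfun : (fun y => ∑ i, ∑ a : ZMod q, f (Function.update y i a))
          = fun y => ((m : ℝ) + 1) * f y + 1 * nbrSum f y := by
        funext y
        rw [hU f y]
        ring
      rw [hfun, nbrSum_lin]
    rw [h3] at h2
    have h4 := hU f x
    linear_combination h1 - h2 + ((q : ℝ) - 2) * h4
  -- Step 7: the decomposition
  have hc : ((m : ℝ) + 1) + (q : ℝ) - 2 ≠ 0 := by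
    have hq' : (3 : ℝ) ≤ (q : ℝ) := by exact_mod_cast hq
    have hm' : (0 : ℝ) ≤ (m : ℝ) := Nat.cast_nonneg m
    intro hcon
    linarith
  refine ⟨fun x => (((q : ℝ) - 2) * f x - nbrSum f x) / (((m : ℝ) + 1) + (q : ℝ) - 2),
      fun x => (((m : ℝ) + 1) * f x + nbrSum f x) / (((m : ℝ) + 1) + (q : ℝ) - 2),
      ?_, ?_, ?_⟩
  · intro x
    show f x = _
    field_simp
    ring
  · intro x
    have hfun : (fun x : HV (m + 1) q =>
          (((q : ℝ) - 2) * f x - nbrSum f x) / (((m : ℝ) + 1) + (q : ℝ) - 2))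
        = fun y => (((q : ℝ) - 2) / (((m : ℝ) + 1) + (q : ℝ) - 2)) * f y
            + (-1 / (((m : ℝ) + 1) + (q : ℝ) - 2)) * nbrSum f y := by
      funext y
      field_simp
      try ring
    rw [hfun, nbrSum_lin, hA2 x]
    push_cast
    field_simp
    try ring
  · intro x
    have hfun : (fun x : HV (m + 1) q =>
          (((m : ℝ) + 1) * f x + nbrSum f x) / (((m : ℝ) + 1) + (q : ℝ) - 2))
        = fun y => ((((m : ℝ) + 1)) / (((m : ℝ) + 1) + (q : ℝ) - 2)) * f y
            + (1 / (((m : ℝ) + 1) + (q : ℝ) - 2)) * nbrSum f y := by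
      funext y
      field_simp
      try ring
    rw [hfun, nbrSum_lin, hA2 x]
    push_cast
    field_simp
    try ring
end
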